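/- Let a, b, c ∈ ℝ \ {0} and let C ∈ DH[t] be the motion polynomial C = (b²+c²)t² + (2a(c·j + b·k) − 2ε(a²(b·j − c·k) − bc(b·k + c·j)))t + 2bc·i − b² + c² − 2aε((b²−c²)·i + 2bc). If there exists a quadratic polynomial M ∈ ℝ[t] such that the norm polynomial satisfies C·C̄ = M², then a² = b². (Consequently the two factorizations of C into linear factors can only coincide — and Bennett synthesis can only fail — when the underlying hyperboloid is a hyperboloid of revolution.) -/

import Mathlib

open Polynomial
set_option maxHeartbeats 1000000
set_option synthInstance.maxHeartbeats 400000
noncomputable section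

/-- The dual quaternions: dual numbers over the real quaternions. -/
abbrev DH : Type := DualNumber (Quaternion ℝ)

/-- Dual quaternion conjugation: the conjugate of `p + εq` is `p̄ + εq̄`. -/
def dconj (h : DH) : DH :=
  TrivSqZeroExt.inl (star (TrivSqZeroExt.fst h)) + TrivSqZeroExt.inr (star (TrivSqZeroExt.snd h))

/-- Coefficientwise conjugation of a dual quaternion polynomial. -/
def pconj (P : Polynomial DH) : Polynomial DH :=
  P.sum fun n a => Polynomial.monomial n (dconj a)

/-- The quaternion unit i. -/
def qi : Quaternion ℝ := ⟨0,1,0,0⟩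
/-- The quaternion unit j. -/
def qj : Quaternion ℝ := ⟨0,0,1,0⟩
/-- The quaternion unit k. -/
def qk : Quaternion ℝ := ⟨0,0,0,1⟩

/-- A dual quaternion polynomial is real if all its coefficients are real scalars. -/
def IsRealPoly (P : Polynomial DH) : Prop :=
  ∃ r : Polynomial ℝ, P = r.map (algebraMap ℝ DH)

/-- The primal part of a dual quaternion polynomial. -/
def primalPart (C : Polynomial DH) : Polynomial (Quaternion ℝ) :=
  C.sum fun n a => Polynomial.monomial n (TrivSqZeroExt.fst a)


/-- The motion polynomial of the line symmetric motion with respect to one family of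
rulings of the hyperboloid `x²b²c² + y²a²c² − z²a²b² = a²b²c²`:
`C = (b²+c²)t² + (2a(c·j + b·k) − 2ε(a²(b·j − c·k) − bc(b·k + c·j)))t
     + 2bc·i − b² + c² − 2aε((b²−c²)·i + 2bc)`. -/
def lineSymC (a b c : ℝ) : Polynomial DH :=
  Polynomial.C (algebraMap ℝ DH (b ^ 2 + c ^ 2)) * X ^ 2 +
  Polynomial.C (TrivSqZeroExt.inl ((2 * a) • (c • qj + b • qk)) -
    TrivSqZeroExt.inr ((2 : ℝ) •
      (a ^ 2 • (b • qj - c • qk) - (b * c) • (b • qk + c • qj)))) * X +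
  Polynomial.C (TrivSqZeroExt.inl
      ((2 * b * c) • qi + algebraMap ℝ (Quaternion ℝ) (c ^ 2 - b ^ 2)) -
    TrivSqZeroExt.inr ((2 * a) •
      ((b ^ 2 - c ^ 2) • qi + algebraMap ℝ (Quaternion ℝ) (2 * b * c))))


section Aux
open TrivSqZeroExt Quaternion

-- auxiliary
lemma dconj_zero : dconj 0 = 0 := by simp [dconj]

lemma coeff_pconj (P : Polynomial DH) (n : ℕ) : (pconj P).coeff n = dconj (P.coeff n) := by
  unfold pconj
  rw [Polynomial.coeff_sum]
  simp only [Polynomial.coeff_monomial]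
  rw [Polynomial.sum_def]
  rw [Finset.sum_ite_eq' P.support n (fun m => dconj (P.coeff m))]
  split_ifs with h
  · rfl
  · rw [Polynomial.notMem_support_iff.mp h, dconj_zero]

lemma pconj_quad (p q r : DH) :
    pconj (monomial 2 p + monomial 1 q + monomial 0 r) =
    monomial 2 (dconj p) + monomial 1 (dconj q) + monomial 0 (dconj r) := by
  apply Polynomial.ext; intro n
  rw [coeff_pconj]
  rcases n with _|_|_|n <;>
    simp [Polynomial.coeff_monomial, dconj_zero]

lemma quad_mul {R : Type*} [Ring R] (p q r p' q' r' : R) :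
    (monomial 2 p + monomial 1 q + monomial 0 r) *
      (monomial 2 p' + monomial 1 q' + monomial 0 r') =
    monomial 4 (p*p') + monomial 3 (p*q'+q*p') + monomial 2 (p*r'+q*q'+r*p')
      + monomial 1 (q*r'+r*q') + monomial 0 (r*r') := by
  simp only [add_mul, mul_add, monomial_mul_monomial, map_add]
  abel

def F : Polynomial DH →+* Polynomial (Quaternion ℝ) :=
  Polynomial.mapRingHom (TrivSqZeroExt.fstHom ℝ (Quaternion ℝ) (Quaternion ℝ)).toRingHom

lemma lineSymC_mono (a b c : ℝ) :
    lineSymC a b c = monomial 2 (algebraMap ℝ DH (b ^ 2 + c ^ 2)) +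
      monomial 1 (TrivSqZeroExt.inl ((2 * a) • (c • qj + b • qk)) -
        TrivSqZeroExt.inr ((2 : ℝ) •
          (a ^ 2 • (b • qj - c • qk) - (b * c) • (b • qk + c • qj)))) +
      monomial 0 (TrivSqZeroExt.inl
          ((2 * b * c) • qi + algebraMap ℝ (Quaternion ℝ) (c ^ 2 - b ^ 2)) -
        TrivSqZeroExt.inr ((2 * a) •
          ((b ^ 2 - c ^ 2) • qi + algebraMap ℝ (Quaternion ℝ) (2 * b * c)))) := by
  unfold lineSymC
  rw [C_mul_X_pow_eq_monomial, C_mul_X_eq_monomial, monomial_zero_left]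

lemma dconj_sub_inl_inr (x y : Quaternion ℝ) :
    dconj (TrivSqZeroExt.inl x - TrivSqZeroExt.inr y) =
      TrivSqZeroExt.inl (star x) - TrivSqZeroExt.inr (star y) := by
  simp [dconj, sub_eq_add_neg]

lemma dconj_algebraMap (r : ℝ) : dconj (algebraMap ℝ DH r) = algebraMap ℝ DH r := by
  have : (algebraMap ℝ DH r) = TrivSqZeroExt.inl (algebraMap ℝ (Quaternion ℝ) r) := rfl
  rw [this]
  simp only [dconj, fst_inl, snd_inl, star_zero, inr_zero, add_zero]
  congr 1
  ext <;> simp [Quaternion.re_star, Quaternion.imI_star, Quaternion.imJ_star, Quaternion.imK_star]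

lemma F_monomial (p : DH) (n : ℕ) : F (monomial n p) = monomial n (fst p) := by
  simp [F, Polynomial.map_monomial]

lemma fst_algebraMap (r : ℝ) : fst (algebraMap ℝ DH r) = algebraMap ℝ (Quaternion ℝ) r := rfl

lemma F_lineSymC (a b c : ℝ) :
    F (lineSymC a b c) = monomial 2 (algebraMap ℝ (Quaternion ℝ) (b ^ 2 + c ^ 2)) +
      monomial 1 ((2 * a) • (c • qj + b • qk)) +
      monomial 0 ((2 * b * c) • qi + algebraMap ℝ (Quaternion ℝ) (c ^ 2 - b ^ 2)) := by
  rw [lineSymC_mono, F.map_add, F.map_add, F_monomial, F_monomial, F_monomial]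
  simp [fst_algebraMap]

lemma F_pconj_lineSymC (a b c : ℝ) :
    F (pconj (lineSymC a b c)) = monomial 2 (algebraMap ℝ (Quaternion ℝ) (b ^ 2 + c ^ 2)) +
      monomial 1 (star ((2 * a) • (c • qj + b • qk))) +
      monomial 0 (star ((2 * b * c) • qi + algebraMap ℝ (Quaternion ℝ) (c ^ 2 - b ^ 2))) := by
  rw [lineSymC_mono, pconj_quad, F.map_add, F.map_add, F_monomial, F_monomial, F_monomial,
    dconj_algebraMap, dconj_sub_inl_inr, dconj_sub_inl_inr]
  simp [fst_algebraMap]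

def Npoly (a b c : ℝ) : Polynomial ℝ :=
  monomial 4 ((b ^ 2 + c ^ 2) ^ 2) +
  monomial 2 (4 * a ^ 2 * (b ^ 2 + c ^ 2) + 2 * (b ^ 2 + c ^ 2) * (c ^ 2 - b ^ 2)) +
  monomial 0 ((b ^ 2 + c ^ 2) ^ 2)

lemma main_prod (a b c : ℝ) :
    F (lineSymC a b c * pconj (lineSymC a b c)) =
      (Npoly a b c).map (algebraMap ℝ (Quaternion ℝ)) := by
  rw [F.map_mul, F_lineSymC, F_pconj_lineSymC, quad_mul]
  have e4 : algebraMap ℝ (Quaternion ℝ) (b ^ 2 + c ^ 2) * algebraMap ℝ (Quaternion ℝ) (b ^ 2 + c ^ 2)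
      = algebraMap ℝ (Quaternion ℝ) ((b ^ 2 + c ^ 2) ^ 2) := by
    rw [← map_mul, ← sq]
  have e3 : algebraMap ℝ (Quaternion ℝ) (b ^ 2 + c ^ 2) * star ((2 * a) • (c • qj + b • qk)) +
      ((2 * a) • (c • qj + b • qk)) * algebraMap ℝ (Quaternion ℝ) (b ^ 2 + c ^ 2) = 0 := by
    ext <;> simp [Quaternion.ext_iff, re_mul, imI_mul, imJ_mul, imK_mul, sq] <;> simp [qi, qj, qk] <;> ring
  have e2 : algebraMap ℝ (Quaternion ℝ) (b ^ 2 + c ^ 2) *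
        star ((2 * b * c) • qi + algebraMap ℝ (Quaternion ℝ) (c ^ 2 - b ^ 2)) +
      ((2 * a) • (c • qj + b • qk)) * star ((2 * a) • (c • qj + b • qk)) +
      ((2 * b * c) • qi + algebraMap ℝ (Quaternion ℝ) (c ^ 2 - b ^ 2)) *
        algebraMap ℝ (Quaternion ℝ) (b ^ 2 + c ^ 2) =
      algebraMap ℝ (Quaternion ℝ) (4 * a ^ 2 * (b ^ 2 + c ^ 2) + 2 * (b ^ 2 + c ^ 2) * (c ^ 2 - b ^ 2)) := by
    ext <;> simp [Quaternion.ext_iff, re_mul, imI_mul, imJ_mul, imK_mul, sq] <;> simp [qi, qj, qk] <;> ring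
  have e1 : ((2 * a) • (c • qj + b • qk)) *
        star ((2 * b * c) • qi + algebraMap ℝ (Quaternion ℝ) (c ^ 2 - b ^ 2)) +
      ((2 * b * c) • qi + algebraMap ℝ (Quaternion ℝ) (c ^ 2 - b ^ 2)) *
        star ((2 * a) • (c • qj + b • qk)) = 0 := by
    ext <;> simp [Quaternion.ext_iff, re_mul, imI_mul, imJ_mul, imK_mul, sq] <;> simp [qi, qj, qk] <;> ring
  have e0 : ((2 * b * c) • qi + algebraMap ℝ (Quaternion ℝ) (c ^ 2 - b ^ 2)) *
        star ((2 * b * c) • qi + algebraMap ℝ (Quaternion ℝ) (c ^ 2 - b ^ 2)) =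
      algebraMap ℝ (Quaternion ℝ) ((b ^ 2 + c ^ 2) ^ 2) := by
    ext <;> simp [Quaternion.ext_iff, re_mul, imI_mul, imJ_mul, imK_mul, sq] <;> simp [qi, qj, qk] <;> ring
  rw [e4, e3, e2, e1, e0]
  simp [Npoly, Polynomial.map_monomial]

end Aux

open TrivSqZeroExt Quaternion

/-- If the norm polynomial of the line symmetric motion is the square `M²` of a
quadratic real polynomial, then `a² = b²`: the two factorizations of `C` can only
coincide when the hyperboloid is a hyperboloid of revolution. -/
theorem line_symmetric_norm_square_implies_revolution (a b c : ℝ)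
    (ha : a ≠ 0) (hb : b ≠ 0) (hc : c ≠ 0)
    (hsq : ∃ M : Polynomial ℝ, M.natDegree = 2 ∧
      lineSymC a b c * pconj (lineSymC a b c) = (M.map (algebraMap ℝ DH)) ^ 2) :
    a ^ 2 = b ^ 2 := by
  obtain ⟨M, hdeg, hM⟩ := hsq
  have hF := congrArg F hM
  rw [main_prod] at hF
  have hcomp : (TrivSqZeroExt.fstHom ℝ (Quaternion ℝ) (Quaternion ℝ)).toRingHom.comp
      (algebraMap ℝ DH) = algebraMap ℝ (Quaternion ℝ) :=
    RingHom.ext fun x => rfl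
  have hmap : F ((M.map (algebraMap ℝ DH)) ^ 2) =
      ((M ^ 2).map (algebraMap ℝ (Quaternion ℝ))) := by
    rw [F.map_pow, Polynomial.map_pow]
    congr 1
    show (M.map (algebraMap ℝ DH)).map _ = _
    rw [Polynomial.map_map, hcomp]
  rw [hmap] at hF
  have hN : Npoly a b c = M ^ 2 :=
    Polynomial.map_injective _ (algebraMap ℝ (Quaternion ℝ)).injective hF
  set α := M.coeff 2 with hαdef
  set β := M.coeff 1 with hβdef
  set γ := M.coeff 0 with hγdef
  have hc3 : M.coeff 3 = 0 := Polynomial.coeff_eq_zero_of_natDegree_lt (by omega)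
  have hc4 : M.coeff 4 = 0 := Polynomial.coeff_eq_zero_of_natDegree_lt (by omega)
  have hmm : ∀ n : ℕ, (M ^ 2).coeff n = ∑ i ∈ Finset.range (n + 1), M.coeff i * M.coeff (n - i) := by
    intro n
    rw [sq, Polynomial.coeff_mul, Finset.Nat.sum_antidiagonal_eq_sum_range_succ_mk]
  have h4 : (b ^ 2 + c ^ 2) ^ 2 = α * α := by
    have := congrArg (fun P => Polynomial.coeff P 4) hN
    simp only [hmm] at this
    rw [show ((Npoly a b c).coeff 4) = (b^2+c^2)^2 by simp only [Npoly, coeff_add, coeff_monomial]; norm_num] at this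
    rw [this]
    simp [Finset.sum_range_succ, hc3, hc4, hαdef, hβdef, hγdef]
  have h3 : 0 = β * α + α * β := by
    have := congrArg (fun P => Polynomial.coeff P 3) hN
    simp only [hmm] at this
    rw [show ((Npoly a b c).coeff 3) = 0 by simp only [Npoly, coeff_add, coeff_monomial]; norm_num] at this
    rw [this]
    simp [Finset.sum_range_succ, hc3, hc4, hαdef, hβdef, hγdef]
  have h2 : 4 * a ^ 2 * (b ^ 2 + c ^ 2) + 2 * (b ^ 2 + c ^ 2) * (c ^ 2 - b ^ 2) =
      γ * α + β * β + α * γ := by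
    have := congrArg (fun P => Polynomial.coeff P 2) hN
    simp only [hmm] at this
    rw [show ((Npoly a b c).coeff 2) =
      4 * a ^ 2 * (b ^ 2 + c ^ 2) + 2 * (b ^ 2 + c ^ 2) * (c ^ 2 - b ^ 2) by
        simp only [Npoly, coeff_add, coeff_monomial]; norm_num] at this
    rw [this]
    simp [Finset.sum_range_succ, hc3, hc4, hαdef, hβdef, hγdef]
  have h0 : (b ^ 2 + c ^ 2) ^ 2 = γ * γ := by
    have := congrArg (fun P => Polynomial.coeff P 0) hN
    simp only [hmm] at this
    rw [show ((Npoly a b c).coeff 0) = (b^2+c^2)^2 by simp only [Npoly, coeff_add, coeff_monomial]; norm_num] at this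
    rw [this]
    simp [Finset.sum_range_succ, hγdef]
  have hs : (0:ℝ) < b ^ 2 + c ^ 2 := by positivity
  have hα : α ≠ 0 := by
    intro h
    rw [h, mul_zero] at h4
    nlinarith
  have hβ : β = 0 := by
    have : 2 * (α * β) = 0 := by linarith [h3]
    rcases mul_eq_zero.mp (by linarith : α * β = 0) with h | h
    · exact absurd h hα
    · exact h
  rw [hβ] at h2
  have h1 : (b ^ 2 + c ^ 2) * (2 * a ^ 2 + c ^ 2 - b ^ 2) = α * γ := by
    linear_combination h2 / 2
  have hfact : (a ^ 2 - b ^ 2) * (a ^ 2 + c ^ 2) * (4 * (b ^ 2 + c ^ 2) ^ 2) = 0 := by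
    linear_combination ((b ^ 2 + c ^ 2) * (2 * a ^ 2 + c ^ 2 - b ^ 2) + α * γ) * h1 -
      γ * γ * h4 - (b ^ 2 + c ^ 2) ^ 2 * h0
  have h5 : (a ^ 2 - b ^ 2) * (a ^ 2 + c ^ 2) = 0 := by
    have h6 : (4 * (b ^ 2 + c ^ 2) ^ 2) ≠ 0 := by positivity
    exact (mul_eq_zero.mp hfact).resolve_right h6
  have h7 : a ^ 2 + c ^ 2 ≠ 0 := by positivity
  have := (mul_eq_zero.mp h5).resolve_right h7
  linarith
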